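/- Let (m₁,m₂,m₃,ξ,p) be a collision solution of the reduced two-body system on [t₀, t*) with t* < ∞ and ξ(t) → +∞ as t → t*⁻. Then p(t) → −∞ and 2p(t) − m₁(t) → −∞ as t → t*⁻ (i.e. the derivative q̇ = 2p − m₁ of the mutual angle tends to −∞ at collision). -/

import Mathlib

open Filter Set

open Topology


private lemma lastNonpos {g : ℝ → ℝ} {a b : ℝ} (hab : a ≤ b)
    (hg : ContinuousOn g (Icc a b)) (hga : g a ≤ 0) (hgb : 0 < g b) :
    ∃ c ∈ Icc a b, g c ≤ 0 ∧ c < b ∧ ∀ s ∈ Ioc c b, 0 < g s := by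
  set S : Set ℝ := Icc a b ∩ g ⁻¹' (Iic 0) with hS
  have hSclosed : IsClosed S := hg.preimage_isClosed_of_isClosed isClosed_Icc isClosed_Iic
  have hSne : S.Nonempty := ⟨a, ⟨left_mem_Icc.mpr hab, hga⟩⟩
  have hSbdd : BddAbove S := BddAbove.mono Set.inter_subset_left bddAbove_Icc
  have hcS : sSup S ∈ S := hSclosed.csSup_mem hSne hSbdd
  have hgc : g (sSup S) ≤ 0 := hcS.2
  have hcb : sSup S < b := lt_of_le_of_ne hcS.1.2 (fun h => by rw [h] at hgc; linarith)
  refine ⟨sSup S, hcS.1, hgc, hcb, ?_⟩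
  intro s hs
  by_contra hle; push_neg at hle
  have hsS : s ∈ S := ⟨⟨le_trans hcS.1.1 (le_of_lt hs.1), hs.2⟩, hle⟩
  exact absurd (le_csSup hSbdd hsS) (not_le.mpr hs.1)

private lemma posRight {f : ℝ → ℝ} {d a b : ℝ} (hab : a < b)
    (hf : HasDerivAt f d a) (hd : 0 < d) (hfa : f a = 0) :
    ∃ s ∈ Ioc a b, 0 < f s := by
  have hs := hasDerivAt_iff_tendsto_slope.mp hf
  have h1 : slope f a ⁻¹' (Ioi 0) ∈ 𝓝[≠] a := hs (Ioi_mem_nhds hd)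
  have h2 : slope f a ⁻¹' (Ioi 0) ∈ 𝓝[>] a :=
    nhdsWithin_mono a (fun x hx => ne_of_gt hx) h1
  have h3 : Ioc a b ∈ 𝓝[>] a := Ioc_mem_nhdsGT_of_mem ⟨le_refl a, hab⟩
  obtain ⟨s, hs1, hs2⟩ := Filter.nonempty_of_mem (Filter.inter_mem h2 h3)
  refine ⟨s, hs2, ?_⟩
  have h4 : 0 < slope f a s := hs1
  rw [slope_def_field, hfa, sub_zero] at h4
  have hsa : 0 < s - a := by have := hs2.1; linarith
  rcases (div_pos_iff).mp h4 with ⟨h, _⟩ | ⟨_, h2'⟩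
  · exact h
  · linarith

private lemma leOfDerivNonpos {f : ℝ → ℝ} {a b : ℝ} (hab : a ≤ b)
    (hd : ∀ x ∈ Icc a b, ∃ d, d ≤ 0 ∧ HasDerivAt f d x) : f b ≤ f a := by
  have hcont : ContinuousOn f (Icc a b) := by
    intro x hx; obtain ⟨d, _, hdd⟩ := hd x hx
    exact hdd.continuousAt.continuousWithinAt
  have hanti : AntitoneOn f (Icc a b) := by
    apply antitoneOn_of_deriv_nonpos (convex_Icc a b) hcont
    · intro x hx
      rw [interior_Icc] at hx
      obtain ⟨d, hd0, hdd⟩ := hd x (Ioo_subset_Icc_self hx)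
      exact (hdd.differentiableAt).differentiableWithinAt
    · intro x hx
      rw [interior_Icc] at hx
      obtain ⟨d, hd0, hdd⟩ := hd x (Ioo_subset_Icc_self hx)
      rw [hdd.deriv]; exact hd0
  exact hanti (left_mem_Icc.mpr hab) (right_mem_Icc.mpr hab) hab

private lemma constOfDerivZero {f : ℝ → ℝ} {a c : ℝ}
    (hd : ∀ x ∈ Ico a c, HasDerivAt f 0 x) : ∀ t ∈ Ico a c, f t = f a := by
  intro t ht
  have hsub : Icc a t ⊆ Ico a c := fun x hx => ⟨hx.1, lt_of_le_of_lt hx.2 ht.2⟩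
  have hsub2 : Ico a t ⊆ Ico a c := fun x hx => ⟨hx.1, lt_of_lt_of_le hx.2 ht.2.le⟩
  have := constant_of_has_deriv_right_zero (f := f) (a := a) (b := t)
    (fun x hx => (hd x (hsub hx)).continuousAt.continuousWithinAt)
    (fun x hx => (hd x (hsub2 hx)).hasDerivWithinAt)
  exact this t (right_mem_Icc.mpr ht.1)

set_option maxHeartbeats 1200000 in
/-- Along a collision solution of the reduced two-body system on `[t₀, t*)` with
`t* < ∞` and `ξ(t) → +∞` as `t → t*⁻`, both `p(t) → −∞` and
`q̇ = 2p(t) − m₁(t) → −∞` as `t → t*⁻`. -/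
theorem p_and_qdot_tendsto_atBot_at_collision
    (t0 tstar : ℝ) (ht0 : t0 < tstar)
    (m1 m2 m3 xi p : ℝ → ℝ)
    (hm1 : ∀ t ∈ Set.Ico t0 tstar,
      HasDerivAt m1 (xi t * (-(m2 t)^2 + (m3 t)^2 + 2 * m2 t * m3 t * xi t)) t)
    (hm2 : ∀ t ∈ Set.Ico t0 tstar,
      HasDerivAt m2 (m1 t * m2 t * xi t - m3 t * p t - 2 * m1 t * m3 t * (xi t)^2) t)
    (hm3 : ∀ t ∈ Set.Ico t0 tstar,
      HasDerivAt m3 (m2 t * p t - m1 t * m3 t * xi t) t)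
    (hxi : ∀ t ∈ Set.Ico t0 tstar,
      HasDerivAt xi (-((xi t)^2 + 1) * (2 * p t - m1 t)) t)
    (hp : ∀ t ∈ Set.Ico t0 tstar,
      HasDerivAt p (-((xi t)^2 + 1) * (1 + m2 t * m3 t - 2 * (m3 t)^2 * xi t)) t)
    (hcoll : Tendsto xi (nhdsWithin tstar (Set.Iio tstar)) atTop) :
    Tendsto p (nhdsWithin tstar (Set.Iio tstar)) atBot ∧
      Tendsto (fun t => 2 * p t - m1 t) (nhdsWithin tstar (Set.Iio tstar)) atBot := by
  have ht0m : t0 ∈ Ico t0 tstar := ⟨le_refl t0, ht0⟩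
  -- the derivative of u = 2p - m1
  obtain ⟨U, hUdef⟩ : ∃ U : ℝ → ℝ, U = fun s =>
      2 * (-((xi s)^2 + 1) * (1 + m2 s * m3 s - 2 * (m3 s)^2 * xi s))
      - xi s * (-(m2 s)^2 + (m3 s)^2 + 2 * m2 s * m3 s * xi s) := ⟨_, rfl⟩
  have hu : ∀ t ∈ Ico t0 tstar, HasDerivAt (fun s => 2 * p s - m1 s) (U t) t := by
    intro t ht
    rw [hUdef]
    exact ((hp t ht).const_mul 2).sub (hm1 t ht)
  -- conservation of C0 = m1² + m2² + m3²
  set C0 : ℝ := m1 t0 ^ 2 + m2 t0 ^ 2 + m3 t0 ^ 2 with hC0def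
  have hCconst : ∀ t ∈ Ico t0 tstar, m1 t ^ 2 + m2 t ^ 2 + m3 t ^ 2 = C0 := by
    have := constOfDerivZero (f := fun s => m1 s ^ 2 + m2 s ^ 2 + m3 s ^ 2)
      (a := t0) (c := tstar) ?_
    · exact this
    intro x hx
    have h := (((hm1 x hx).fun_pow 2).fun_add ((hm2 x hx).fun_pow 2)).fun_add ((hm3 x hx).fun_pow 2)
    refine h.congr_deriv ?_
    push_cast
    ring
  have hC0 : 0 ≤ C0 := by positivity
  -- conservation of energy E0
  set E0 : ℝ := p t0 ^ 2 - m1 t0 * p t0 + m3 t0 ^ 2 * xi t0 ^ 2 - m2 t0 * m3 t0 * xi t0 - xi t0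
    with hE0def
  have hEconst : ∀ t ∈ Ico t0 tstar,
      p t ^ 2 - m1 t * p t + m3 t ^ 2 * xi t ^ 2 - m2 t * m3 t * xi t - xi t = E0 := by
    have := constOfDerivZero
      (f := fun s => p s ^ 2 - m1 s * p s + m3 s ^ 2 * xi s ^ 2 - m2 s * m3 s * xi s - xi s)
      (a := t0) (c := tstar) ?_
    · exact this
    intro x hx
    have h := (((((hp x hx).fun_pow 2).fun_sub ((hm1 x hx).fun_mul (hp x hx))).fun_add
      (((hm3 x hx).fun_pow 2).fun_mul ((hxi x hx).fun_pow 2))).fun_sub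
      (((hm2 x hx).fun_mul (hm3 x hx)).fun_mul (hxi x hx))).fun_sub (hxi x hx)
    refine h.congr_deriv ?_
    push_cast
    ring
  -- the threshold
  set Xi : ℝ := max 1 (2 * (4 * |E0| + 2 * C0 + 2)) with hXidef
  have hXi1 : (1 : ℝ) ≤ Xi := le_max_left _ _
  have hXi2 : 2 * (4 * |E0| + 2 * C0 + 2) ≤ Xi := le_max_right _ _
  -- the key derivative lower bound
  have key : ∀ t ∈ Ico t0 tstar, Xi ≤ xi t → (2 * p t - m1 t) ^ 2 ≤ xi t / 4 →
      xi t ^ 2 ≤ U t := by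
    intro t ht hXix hu2
    have hE' := hEconst t ht
    have hC' := hCconst t ht
    have hx1 : (1 : ℝ) ≤ xi t := le_trans hXi1 hXix
    have hxpos : (0 : ℝ) < xi t := by linarith
    have habs1 : -|E0| ≤ E0 := neg_abs_le E0
    have hXx : 2 * (4 * |E0| + 2 * C0 + 2) ≤ xi t := le_trans hXi2 hXix
    have hid : xi t * U t = 2 * xi t ^ 3 - xi t ^ 2 * (2 * p t - m1 t) ^ 2
        + xi t ^ 2 * (4 * E0 + m1 t ^ 2 + m2 t ^ 2) - 2 * xi t - 2 * m2 t * m3 t * xi t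
        + 3 * m3 t ^ 2 * xi t ^ 2 := by
      rw [hUdef]
      simp only
      linear_combination (4 * xi t ^ 2) * hE'
    have h3 : xi t ^ 3 ≤ xi t * U t := by
      rw [hid]
      have f1 := mul_le_mul_of_nonneg_left hu2 (sq_nonneg (xi t))
      have f2 := mul_le_mul_of_nonneg_left hXx (sq_nonneg (xi t))
      have f3 := mul_nonneg (sq_nonneg (m2 t - m3 t)) hxpos.le
      have fC := mul_le_mul_of_nonneg_right
        (show m2 t ^ 2 + m3 t ^ 2 ≤ C0 by nlinarith [sq_nonneg (m1 t)]) hxpos.le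
      have f6 : xi t ≤ xi t ^ 2 := by nlinarith
      have f7 := mul_le_mul_of_nonneg_left f6 hC0
      have f8 := mul_nonneg (by linarith : (0:ℝ) ≤ E0 + |E0|) (sq_nonneg (xi t))
      have f9a := mul_nonneg (sq_nonneg (m1 t)) (sq_nonneg (xi t))
      have f9b := mul_nonneg (sq_nonneg (m2 t)) (sq_nonneg (xi t))
      have f9c := mul_nonneg (sq_nonneg (m3 t)) (sq_nonneg (xi t))
      have f10 := mul_nonneg (abs_nonneg E0) (sq_nonneg (xi t))
      have f11 := mul_nonneg hC0 (sq_nonneg (xi t))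
      linarith [f1, f2, f3, fC, f7, f8, f9a, f9b, f9c, f10, f11, sq_nonneg (xi t)]
    have h4 : xi t * xi t ^ 2 ≤ xi t * U t := by linear_combination h3
    exact le_of_mul_le_mul_left h4 hxpos
  -- a tail on which xi ≥ Xi
  obtain ⟨l, hl, hsubl⟩ := mem_nhdsLT_iff_exists_Ioo_subset.mp
    (hcoll.eventually_ge_atTop Xi)
  set t1 : ℝ := max l t0 with ht1def
  have ht1lt : t1 < tstar := max_lt hl ht0
  have htail : ∀ t ∈ Ioo t1 tstar, Xi ≤ xi t := fun t ht =>
    hsubl ⟨lt_of_le_of_lt (le_max_left l t0) ht.1, ht.2⟩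
  have htailsub : Ioo t1 tstar ⊆ Ico t0 tstar := fun t ht =>
    ⟨le_of_lt (lt_of_le_of_lt (le_max_right l t0) ht.1), ht.2⟩
  have hxi1 : ∀ t ∈ Ioo t1 tstar, (1:ℝ) ≤ xi t := fun t ht => le_trans hXi1 (htail t ht)
  -- u < 0 on the tail
  have hneg : ∀ t ∈ Ioo t1 tstar, 2 * p t - m1 t < 0 := by
    intro t2 ht2
    by_contra hge0
    push_neg at hge0
    have hge : ∀ s ∈ Ico t2 tstar, 0 ≤ 2 * p s - m1 s := by
      intro t3 ht3
      by_contra hlt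
      push_neg at hlt
      have ht23 : t2 < t3 := by
        rcases lt_or_eq_of_le ht3.1 with h | h
        · exact h
        · rw [← h] at hlt; linarith
      have hsub23 : Icc t2 t3 ⊆ Ioo t1 tstar := fun x hx =>
        ⟨lt_of_lt_of_le ht2.1 hx.1, lt_of_le_of_lt hx.2 ht3.2⟩
      obtain ⟨t4, ht4Icc, ht4le, ht4lt, ht4after⟩ :=
        lastNonpos (g := fun s => -(2 * p s - m1 s)) ht23.le
          (fun x hx => ((hu x (htailsub (hsub23 hx))).continuousAt.neg).continuousWithinAt)
          (by simpa using hge0) (by simpa using hlt)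
      have ht4mem : t4 ∈ Ioo t1 tstar := hsub23 ht4Icc
      have ht4mem' : t4 ∈ Ico t0 tstar := htailsub ht4mem
      -- u t4 = 0
      have hu4le : 2 * p t4 - m1 t4 ≤ 0 := by
        have htend : Tendsto (fun s => 2 * p s - m1 s) (𝓝[>] t4)
            (𝓝 (2 * p t4 - m1 t4)) :=
          ((hu t4 ht4mem').continuousAt).continuousWithinAt
        refine le_of_tendsto htend ?_
        filter_upwards [Ioc_mem_nhdsGT_of_mem (⟨le_refl t4, ht4lt⟩ : t4 ∈ Ico t4 t3)] with s hs
        have := ht4after s hs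
        linarith
      have hu4 : 2 * p t4 - m1 t4 = 0 := le_antisymm hu4le (by simpa using ht4le)
      have hU4 : xi t4 ^ 2 ≤ U t4 := by
        apply key t4 ht4mem' (htail t4 ht4mem)
        rw [hu4]
        nlinarith [hxi1 t4 ht4mem]
      have hU4pos : 0 < U t4 := lt_of_lt_of_le (by nlinarith [hxi1 t4 ht4mem]) hU4
      obtain ⟨s, hsIoc, hspos⟩ := posRight ht4lt (hu t4 ht4mem') hU4pos hu4
      have := ht4after s hsIoc
      linarith
    -- xi is nonincreasing on [t2, tstar)
    have hanti : ∀ s ∈ Ico t2 tstar, xi s ≤ xi t2 := by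
      intro s hs
      refine leOfDerivNonpos hs.1 (fun x hx => ?_)
      have hxmem : x ∈ Ico t0 tstar := htailsub
        ⟨lt_of_lt_of_le ht2.1 hx.1, lt_of_le_of_lt hx.2 hs.2⟩
      refine ⟨_, ?_, hxi x hxmem⟩
      have hux : 0 ≤ 2 * p x - m1 x := hge x ⟨hx.1, lt_of_le_of_lt hx.2 hs.2⟩
      nlinarith [sq_nonneg (xi x)]
    obtain ⟨s, hs1, hs2⟩ := ((hcoll.eventually_gt_atTop (xi t2)).and
      (eventually_of_mem (Ioo_mem_nhdsLT_of_mem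
        (⟨ht2.2, le_refl tstar⟩ : tstar ∈ Ioc t2 tstar)) (fun x hx => hx))).exists
    exact absurd (hanti s ⟨hs2.1.le, hs2.2⟩) (not_le.mpr hs1)
  -- u² > ξ/4 on the tail
  have hbig : ∀ t ∈ Ioo t1 tstar, xi t / 4 < (2 * p t - m1 t) ^ 2 := by
    intro t5 ht5
    by_contra hle5
    push_neg at hle5
    have hpers : ∀ s ∈ Ico t5 tstar, (2 * p s - m1 s) ^ 2 ≤ xi s / 4 := by
      intro t6 ht6
      by_contra h6
      push_neg at h6
      have ht56 : t5 < t6 := by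
        rcases lt_or_eq_of_le ht6.1 with h | h
        · exact h
        · rw [← h] at h6; linarith
      have hsub56 : Icc t5 t6 ⊆ Ioo t1 tstar := fun x hx =>
        ⟨lt_of_lt_of_le ht5.1 hx.1, lt_of_le_of_lt hx.2 ht6.2⟩
      have hφd : ∀ x ∈ Icc t5 t6, HasDerivAt (fun s => (2 * p s - m1 s) ^ 2 - xi s / 4)
          ((2 : ℕ) * (2 * p x - m1 x) ^ 1 * U x
            - (-((xi x)^2 + 1) * (2 * p x - m1 x)) / 4) x := by
        intro x hx
        have hxm := htailsub (hsub56 hx)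
        exact ((hu x hxm).fun_pow 2).sub ((hxi x hxm).div_const 4)
      obtain ⟨t7, ht7Icc, ht7le, ht7lt, ht7after⟩ :=
        lastNonpos (g := fun s => (2 * p s - m1 s) ^ 2 - xi s / 4) ht56.le
          (fun x hx => ((hφd x hx).continuousAt).continuousWithinAt)
          (by simpa using hle5) (by simpa using h6.le.lt_of_ne (by intro h; nlinarith))
      have ht7mem : t7 ∈ Ioo t1 tstar := hsub56 ht7Icc
      have ht7mem' : t7 ∈ Ico t0 tstar := htailsub ht7mem
      -- φ t7 = 0
      have hφ7ge : 0 ≤ (2 * p t7 - m1 t7) ^ 2 - xi t7 / 4 := by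
        have htend : Tendsto (fun s => (2 * p s - m1 s) ^ 2 - xi s / 4) (𝓝[>] t7)
            (𝓝 ((2 * p t7 - m1 t7) ^ 2 - xi t7 / 4)) :=
          ((hφd t7 ht7Icc).continuousAt).continuousWithinAt
        refine ge_of_tendsto htend ?_
        filter_upwards [Ioc_mem_nhdsGT_of_mem (⟨le_refl t7, ht7lt⟩ : t7 ∈ Ico t7 t6)] with s hs
        exact (ht7after s hs).le
      have hφ7 : (2 * p t7 - m1 t7) ^ 2 - xi t7 / 4 = 0 := le_antisymm ht7le hφ7ge
      have hu7neg : 2 * p t7 - m1 t7 < 0 := hneg t7 ht7mem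
      have hU7 : xi t7 ^ 2 ≤ U t7 := key t7 ht7mem' (htail t7 ht7mem) (by nlinarith)
      have hφ'neg : (2 : ℕ) * (2 * p t7 - m1 t7) ^ 1 * U t7
          - (-((xi t7)^2 + 1) * (2 * p t7 - m1 t7)) / 4 < 0 := by
        push_cast
        have hx1 := hxi1 t7 ht7mem
        have hsq : (1:ℝ) ≤ xi t7 ^ 2 := by nlinarith
        have hbpos : (0:ℝ) < 2 * U t7 + ((xi t7) ^ 2 + 1) / 4 := by linarith
        have := mul_pos (neg_pos.mpr hu7neg) hbpos
        nlinarith [this]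
      obtain ⟨s, hsIoc, hspos⟩ := posRight ht7lt ((hφd t7 ht7Icc).neg)
        (by linarith) (by exact neg_eq_zero.mpr hφ7)
      have h1 := ht7after s hsIoc
      have h2 : 0 < -((2 * p s - m1 s) ^ 2 - xi s / 4) := hspos
      linarith
    -- ψ = u² + ξ is nonincreasing on [t5, tstar), contradicting ξ → ∞
    have hψ : ∀ s ∈ Ico t5 tstar, xi s ≤ (2 * p t5 - m1 t5) ^ 2 + xi t5 := by
      intro s hs
      have hψle : (2 * p s - m1 s) ^ 2 + xi s ≤ (2 * p t5 - m1 t5) ^ 2 + xi t5 := by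
        refine leOfDerivNonpos (f := fun s => (2 * p s - m1 s) ^ 2 + xi s) hs.1
          (fun x hx => ?_)
        have hxtail : x ∈ Ioo t1 tstar :=
          ⟨lt_of_lt_of_le ht5.1 hx.1, lt_of_le_of_lt hx.2 hs.2⟩
        have hxm : x ∈ Ico t0 tstar := htailsub hxtail
        have hxIco : x ∈ Ico t5 tstar := ⟨hx.1, lt_of_le_of_lt hx.2 hs.2⟩
        refine ⟨_, ?_, ((hu x hxm).fun_pow 2).add (hxi x hxm)⟩
        have hUx := key x hxm (htail x hxtail) (hpers x hxIco)
        have hux := hneg x hxtail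
        have hx1 := hxi1 x hxtail
        have hbr : (0:ℝ) ≤ 2 * U x - ((xi x) ^ 2 + 1) := by
          nlinarith [hUx, sq_nonneg (xi x - 1), hx1]
        push_cast
        nlinarith [mul_nonneg (neg_nonneg.mpr hux.le) hbr]
      nlinarith [sq_nonneg (2 * p s - m1 s)]
    obtain ⟨s, hs1, hs2⟩ := ((hcoll.eventually_gt_atTop ((2 * p t5 - m1 t5) ^ 2 + xi t5)).and
      (eventually_of_mem (Ioo_mem_nhdsLT_of_mem
        (⟨ht5.2, le_refl tstar⟩ : tstar ∈ Ioc t5 tstar)) (fun x hx => hx))).exists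
    exact absurd (hψ s ⟨hs2.1.le, hs2.2⟩) (not_le.mpr hs1)
  -- conclude: u → -∞
  have htendu : Tendsto (fun t => 2 * p t - m1 t) (𝓝[<] tstar) atBot := by
    rw [tendsto_atBot]
    intro M
    filter_upwards [hcoll.eventually_ge_atTop (4 * M ^ 2),
      eventually_of_mem (Ioo_mem_nhdsLT_of_mem
        (⟨ht1lt, le_refl tstar⟩ : tstar ∈ Ioc t1 tstar)) (fun x hx => hx)] with t hM ht
    have h1 := hneg t ht
    have h2 := hbig t ht
    nlinarith [sq_nonneg (2 * p t - m1 t + M), sq_nonneg (2 * p t - m1 t - M)]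
  refine ⟨?_, htendu⟩
  -- p → -∞
  rw [tendsto_atBot]
  intro M
  filter_upwards [tendsto_atBot.mp htendu (2 * M - C0 - 1),
    eventually_of_mem (Ioo_mem_nhdsLT_of_mem
      (⟨ht0, le_refl tstar⟩ : tstar ∈ Ioc t0 tstar)) (fun x hx => hx)] with t h1 ht
  have hC' := hCconst t ⟨ht.1.le, ht.2⟩
  have hm1b : m1 t ≤ C0 + 1 := by nlinarith [sq_nonneg (m1 t - 1), sq_nonneg (m2 t), sq_nonneg (m3 t)]
  linarith
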